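/- arXiv:2406.04060 — 3 statements merged into one kernel-verified Lean document; each statement's English description precedes it below -/
import Mathlib

section
/- For distinct vertices u and v of the complete bipartite graph K_{m,n} with parts X of size m and Y of size n, the effective resistance (resistance distance) between u and v equals 2/n if both u,v lie in X, equals 2/m if both lie in Y, and equals (m+n-1)/(mn) if u lies in X and v lies in Y. -/
open Matrix Finset

open Classical in
/-- The Moore–Penrose pseudoinverse of a real square matrix, defined via the
four Penrose conditions (it is unique when it exists). -/
noncomputable def Matrix.mpinv {m : Type*} [Fintype m] [DecidableEq m]
    (A : Matrix m m ℝ) : Matrix m m ℝ :=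
  if h : ∃ B : Matrix m m ℝ,
      A * B * A = A ∧ B * A * B = B ∧ (A * B)ᵀ = A * B ∧ (B * A)ᵀ = B * A
  then h.choose else 0

/-- Effective resistance between `u` and `v` with respect to a (weighted)
Laplacian matrix `L`:  `(e_u - e_v)ᵀ L⁺ (e_u - e_v)`. -/
noncomputable def effRes {m : Type*} [Fintype m] [DecidableEq m]
    (L : Matrix m m ℝ) (u v : m) : ℝ :=
  (Pi.single u 1 - Pi.single v 1) ⬝ᵥ (L.mpinv *ᵥ (Pi.single u 1 - Pi.single v 1))

/-- The (real) Laplacian matrix of a simple graph. -/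
noncomputable def lapm {V : Type*} [Fintype V] [DecidableEq V]
    (G : SimpleGraph V) : Matrix V V ℝ :=
  letI := Classical.decRel G.Adj
  G.lapMatrix ℝ

/-- Resistance distance between two vertices of a simple graph. -/
noncomputable def resDist {V : Type*} [Fintype V] [DecidableEq V]
    (G : SimpleGraph V) (u v : V) : ℝ :=
  effRes (lapm G) u v

/-- Resistance diameter of a simple graph. -/
noncomputable def resDiam {V : Type*} [Fintype V] [DecidableEq V]
    (G : SimpleGraph V) : ℝ :=
  ⨆ p : V × V, resDist G p.1 p.2

/-- The weighted Laplacian of the cone over `G` with apex `Sum.inr ()`: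
edges of `G` have conductance `1` (unit resistance), and each vertex of `G`
is joined to the apex by an edge of conductance `m` (resistance `1/m`). -/
noncomputable def coneLap {V : Type*} [Fintype V] [DecidableEq V]
    (G : SimpleGraph V) (m : ℝ) : Matrix (V ⊕ Unit) (V ⊕ Unit) ℝ :=
  letI := Classical.decRel G.Adj
  let W : Matrix (V ⊕ Unit) (V ⊕ Unit) ℝ := fun i j =>
    match i, j with
    | Sum.inl a, Sum.inl b => if G.Adj a b then 1 else 0
    | Sum.inl _, Sum.inr _ => m
    | Sum.inr _, Sum.inl _ => m
    | Sum.inr _, Sum.inr _ => 0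
  Matrix.of fun i j => (if i = j then ∑ k, W i k else 0) - W i j

/-- The `k`-dimensional hypercube graph `Q_k`. -/
def hypercube (k : ℕ) : SimpleGraph (Fin k → Bool) where
  Adj x y := (Finset.univ.filter fun i => x i ≠ y i).card = 1
  symm := by
    constructor
    intro x y h
    rw [← h]
    congr 1
    ext i
    simp [ne_comm]
  loopless := by constructor; intro x; simp

/-- The join `G + H` of two graphs on disjoint vertex sets. -/
def graphJoin {V W : Type*} (G : SimpleGraph V) (H : SimpleGraph W) :
    SimpleGraph (V ⊕ W) where
  Adj x y :=
    match x, y with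
    | Sum.inl a, Sum.inl b => G.Adj a b
    | Sum.inr a, Sum.inr b => H.Adj a b
    | Sum.inl _, Sum.inr _ => True
    | Sum.inr _, Sum.inl _ => True
  symm := by
    constructor
    rintro (a | a) (b | b) h
    · exact G.adj_symm h
    · trivial
    · trivial
    · exact H.adj_symm h
  loopless := by
    constructor
    rintro (a | a) h
    · exact G.irrefl h
    · exact H.irrefl h


set_option linter.unreachableTactic false
set_option linter.unusedTactic false

noncomputable def Lmat (m n : ℕ) : Matrix (Fin m ⊕ Fin n) (Fin m ⊕ Fin n) ℝ :=
  fun i j => match i, j with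
  | Sum.inl a, Sum.inl b => if a = b then (n : ℝ) else 0
  | Sum.inl _, Sum.inr _ => -1
  | Sum.inr _, Sum.inl _ => -1
  | Sum.inr a, Sum.inr b => if a = b then (m : ℝ) else 0

noncomputable def Bmat (m n : ℕ) : Matrix (Fin m ⊕ Fin n) (Fin m ⊕ Fin n) ℝ :=
  fun i j => match i, j with
  | Sum.inl a, Sum.inl b =>
      (if a = b then (1 : ℝ) / n else 0) + (-1 / ((m + n : ℝ)) ^ 2 - 1 / (n * (m + n : ℝ)))
  | Sum.inl _, Sum.inr _ => -1 / ((m + n : ℝ)) ^ 2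
  | Sum.inr _, Sum.inl _ => -1 / ((m + n : ℝ)) ^ 2
  | Sum.inr a, Sum.inr b =>
      (if a = b then (1 : ℝ) / m else 0) + (-1 / ((m + n : ℝ)) ^ 2 - 1 / (m * (m + n : ℝ)))

noncomputable def Pmat (m n : ℕ) : Matrix (Fin m ⊕ Fin n) (Fin m ⊕ Fin n) ℝ :=
  fun i j => (if i = j then 1 else 0) - 1 / (m + n : ℝ)

variable {m n : ℕ}

lemma LB_eq (hm : 0 < m) (hn : 0 < n) : Lmat m n * Bmat m n = Pmat m n := by
  have hm' : (m : ℝ) > 0 := by exact_mod_cast hm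
  have hn' : (n : ℝ) > 0 := by exact_mod_cast hn
  have hN : (m : ℝ) + n > 0 := by positivity
  ext i j
  rcases i with a | a <;> rcases j with b | b <;>
    simp only [Matrix.mul_apply, Fintype.sum_sum_type, Lmat, Bmat, Pmat,
      Sum.inl.injEq, Sum.inr.injEq, reduceCtorEq, if_false,
      ite_mul, mul_ite, mul_add, mul_zero, zero_mul, mul_one, one_mul, neg_mul, neg_neg,
      Finset.sum_ite_eq, Finset.sum_ite_eq', Finset.mem_univ, if_true,
      Finset.sum_add_distrib, Finset.sum_const, Finset.card_univ, Fintype.card_fin,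
      nsmul_eq_mul, Finset.sum_neg_distrib]
  · by_cases h : a = b <;> simp only [h, if_true, if_false] <;> field_simp <;> try ring
  · field_simp; try ring
  · field_simp; try ring
  · by_cases h : a = b <;> simp only [h, if_true, if_false] <;> field_simp <;> try ring

lemma PL_eq (hm : 0 < m) (hn : 0 < n) : Pmat m n * Lmat m n = Lmat m n := by
  have hm' : (m : ℝ) > 0 := by exact_mod_cast hm
  have hn' : (n : ℝ) > 0 := by exact_mod_cast hn
  have hN : (m : ℝ) + n > 0 := by positivity
  ext i j
  rcases i with a | a <;> rcases j with b | b <;>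
    simp only [Matrix.mul_apply, Fintype.sum_sum_type, Lmat, Pmat,
      Sum.inl.injEq, Sum.inr.injEq, reduceCtorEq, if_false,
      ite_mul, mul_ite, mul_add, mul_zero, zero_mul, mul_one, one_mul, neg_mul, neg_neg,
      mul_neg, sub_mul, mul_sub,
      Finset.sum_ite_eq, Finset.sum_ite_eq', Finset.mem_univ, if_true,
      Finset.sum_add_distrib, Finset.sum_sub_distrib, Finset.sum_const,
      Finset.card_univ, Fintype.card_fin, nsmul_eq_mul, Finset.sum_neg_distrib]
  · by_cases h : a = b <;> simp only [h, if_true, if_false] <;> field_simp <;> try ring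
  · field_simp; try ring
  · field_simp; try ring
  · by_cases h : a = b <;> simp only [h, if_true, if_false] <;> field_simp <;> try ring

lemma BP_eq (hm : 0 < m) (hn : 0 < n) : Bmat m n * Pmat m n = Bmat m n := by
  have hm' : (m : ℝ) > 0 := by exact_mod_cast hm
  have hn' : (n : ℝ) > 0 := by exact_mod_cast hn
  have hN : (m : ℝ) + n > 0 := by positivity
  ext i j
  rcases i with a | a <;> rcases j with b | b <;>
    simp only [Matrix.mul_apply, Fintype.sum_sum_type, Bmat, Pmat,
      Sum.inl.injEq, Sum.inr.injEq, reduceCtorEq, if_false,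
      ite_mul, mul_ite, mul_add, add_mul, mul_zero, zero_mul, mul_one, one_mul,
      neg_mul, neg_neg, mul_neg, sub_mul, mul_sub,
      Finset.sum_ite_eq, Finset.sum_ite_eq', Finset.mem_univ, if_true,
      Finset.sum_add_distrib, Finset.sum_sub_distrib, Finset.sum_const,
      Finset.card_univ, Fintype.card_fin, nsmul_eq_mul, Finset.sum_neg_distrib]
  · by_cases h : a = b <;> simp only [h, if_true, if_false] <;> field_simp <;> try ring
  · field_simp; try ring
  · field_simp; try ring
  · by_cases h : a = b <;> simp only [h, if_true, if_false] <;> field_simp <;> try ring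

lemma Lmat_symm : (Lmat m n)ᵀ = Lmat m n := by
  ext i j
  rcases i with a | a <;> rcases j with b | b <;>
    simp [Lmat, Matrix.transpose_apply, eq_comm]

lemma Bmat_symm : (Bmat m n)ᵀ = Bmat m n := by
  ext i j
  rcases i with a | a <;> rcases j with b | b <;>
    simp [Bmat, Matrix.transpose_apply, eq_comm]

lemma Pmat_symm : (Pmat m n)ᵀ = Pmat m n := by
  ext i j
  simp [Pmat, Matrix.transpose_apply, eq_comm]


section MPinvAux

variable {k : Type*} [Fintype k] [DecidableEq k]

lemma penrose_unique (A B C : Matrix k k ℝ)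
    (hb1 : A * B * A = A) (hb2 : B * A * B = B)
    (hb3 : (A * B)ᵀ = A * B) (hb4 : (B * A)ᵀ = B * A)
    (hc1 : A * C * A = A) (hc2 : C * A * C = C)
    (hc3 : (A * C)ᵀ = A * C) (hc4 : (C * A)ᵀ = C * A) : B = C := by
  have hAB : A * B = A * C := by
    have h1 : A * B = (A * B) * (A * C) := by
      rw [← hb3, ← hc3]
      nth_rewrite 1 [← hc1]
      simp only [Matrix.transpose_mul, Matrix.mul_assoc]
    rw [h1, ← Matrix.mul_assoc (A * B) A C, hb1]
  have hBA : B * A = C * A := by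
    have h1 : B * A = (C * A) * (B * A) := by
      rw [← hb4, ← hc4]
      nth_rewrite 1 [← hc1]
      simp only [Matrix.transpose_mul, Matrix.mul_assoc]
    rw [h1, Matrix.mul_assoc C A (B * A), ← Matrix.mul_assoc A B A, hb1]
  calc B = B * A * B := hb2.symm
  _ = (C * A) * B := by rw [hBA]
  _ = C * (A * B) := by rw [Matrix.mul_assoc]
  _ = C * (A * C) := by rw [hAB]
  _ = C := by rw [← Matrix.mul_assoc, hc2]

lemma mpinv_eq_of (A B : Matrix k k ℝ)
    (h1 : A * B * A = A) (h2 : B * A * B = B)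
    (h3 : (A * B)ᵀ = A * B) (h4 : (B * A)ᵀ = B * A) : A.mpinv = B := by
  classical
  have hex : ∃ B : Matrix k k ℝ,
      A * B * A = A ∧ B * A * B = B ∧ (A * B)ᵀ = A * B ∧ (B * A)ᵀ = B * A :=
    ⟨B, h1, h2, h3, h4⟩
  rw [Matrix.mpinv, dif_pos hex]
  obtain ⟨c1, c2, c3, c4⟩ := hex.choose_spec
  exact penrose_unique A _ B c1 c2 c3 c4 h1 h2 h3 h4

lemma quadform_eq (B : Matrix k k ℝ) (u v : k) :
    (Pi.single u 1 - Pi.single v 1) ⬝ᵥ (B *ᵥ (Pi.single u 1 - Pi.single v 1))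
      = B u u - B u v - B v u + B v v := by
  simp only [dotProduct, Matrix.mulVec, Pi.sub_apply, Pi.single_apply,
    sub_mul, mul_sub, ite_mul, mul_ite, one_mul, mul_one, zero_mul, mul_zero,
    Finset.sum_sub_distrib, Finset.sum_ite_eq, Finset.sum_ite_eq',
    Finset.mem_univ, if_true]
  ring

end MPinvAux

section KMNfinal

variable {m n : ℕ}

lemma mpinv_Lmat (hm : 0 < m) (hn : 0 < n) : (Lmat m n).mpinv = Bmat m n := by
  have hBL : Bmat m n * Lmat m n = Pmat m n := by
    have h := congrArg Matrix.transpose (LB_eq hm hn)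
    rwa [Matrix.transpose_mul, Bmat_symm, Lmat_symm, Pmat_symm] at h
  have hPB : Pmat m n * Bmat m n = Bmat m n := by
    have h := congrArg Matrix.transpose (BP_eq hm hn)
    rwa [Matrix.transpose_mul, Bmat_symm, Pmat_symm] at h
  apply mpinv_eq_of
  · rw [LB_eq hm hn, PL_eq hm hn]
  · rw [hBL, hPB]
  · rw [LB_eq hm hn]; exact Pmat_symm
  · rw [hBL]; exact Pmat_symm

lemma degree_indep {V : Type*} [Fintype V] (G : SimpleGraph V) (v : V)
    (i1 i2 : Fintype (G.neighborSet v)) :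
    @SimpleGraph.degree V G v i1 = @SimpleGraph.degree V G v i2 := by
  congr 1
  exact Subsingleton.elim i1 i2

open Classical in
lemma deg_inl (a : Fin m) :
    (completeBipartiteGraph (Fin m) (Fin n)).degree (Sum.inl a) = n := by
  rw [← SimpleGraph.card_neighborFinset_eq_degree, SimpleGraph.neighborFinset_eq_filter,
    Finset.card_filter, Fintype.sum_sum_type]
  simp

open Classical in
lemma deg_inr (a : Fin n) :
    (completeBipartiteGraph (Fin m) (Fin n)).degree (Sum.inr a) = m := by
  rw [← SimpleGraph.card_neighborFinset_eq_degree, SimpleGraph.neighborFinset_eq_filter,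
    Finset.card_filter, Fintype.sum_sum_type]
  simp

lemma lapm_eq_Lmat : lapm (completeBipartiteGraph (Fin m) (Fin n)) = Lmat m n := by
  unfold lapm
  ext i j
  rcases i with a | a <;> rcases j with b | b <;>
    simp [SimpleGraph.lapMatrix, SimpleGraph.degMatrix, Matrix.diagonal, Lmat]
  · by_cases h : a = b <;> simp only [h, if_true, if_false]
    norm_cast
    exact (degree_indep _ _ _ _).trans (deg_inl b)
  · by_cases h : a = b <;> simp only [h, if_true, if_false]
    norm_cast
    exact (degree_indep _ _ _ _).trans (deg_inr b)

end KMNfinal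

/-- Resistance distances in the complete bipartite graph `K_{m,n}`. -/
theorem resDist_completeBipartite (m n : ℕ) (hm : 0 < m) (hn : 0 < n) :
    (∀ i j : Fin m, i ≠ j →
      resDist (completeBipartiteGraph (Fin m) (Fin n)) (Sum.inl i) (Sum.inl j) = 2 / n) ∧
    (∀ i j : Fin n, i ≠ j →
      resDist (completeBipartiteGraph (Fin m) (Fin n)) (Sum.inr i) (Sum.inr j) = 2 / m) ∧
    (∀ (i : Fin m) (j : Fin n),
      resDist (completeBipartiteGraph (Fin m) (Fin n)) (Sum.inl i) (Sum.inr j)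
        = ((m : ℝ) + n - 1) / (m * n)) := by
  have hm0 : (m : ℝ) ≠ 0 := by positivity
  have hn0 : (n : ℝ) ≠ 0 := by positivity
  have hN0 : (m : ℝ) + n ≠ 0 := by positivity
  refine ⟨fun i j hij => ?_, fun i j hij => ?_, fun i j => ?_⟩ <;>
    rw [resDist, effRes, lapm_eq_Lmat, mpinv_Lmat hm hn, quadform_eq]
  · simp only [Bmat, if_true, Sum.inl.injEq, hij, hij.symm, if_false, if_neg hij]
    field_simp
    ring
  · simp only [Bmat, if_true, Sum.inr.injEq, hij, hij.symm, if_false, if_neg hij]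
    field_simp
    ring
  · simp only [Bmat, if_true]
    field_simp
    ring
end

section
/- Let G and H be connected graphs on n and m vertices with Laplacian eigenvalues λ_1,...,λ_{n-1} > 0, λ_n = 0 and μ_1,...,μ_{m-1} > 0, μ_m = 0, and corresponding orthonormal eigenvectors Ψ_1,...,Ψ_n and Φ_1,...,Φ_m (with Ψ_n, Φ_m the normalized all-ones vectors). Then for u,v in V(G) and x,y in V(H), the resistance distance in the Cartesian product satisfies R_{G□H}[(u,x),(v,y)] = (1/m)·R_G[u,v] + (1/n)·R_H[x,y] + Σ_{p=1}^{n-1} Σ_{q=1}^{m-1} (Ψ_{pu}Φ_{qx} − Ψ_{pv}Φ_{qy})² / (λ_p + μ_q). -/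
open Matrix Finset

/-! ### Auxiliary material for the proof -/

set_option linter.unusedSectionVars false
set_option maxHeartbeats 2000000

section AuxVec
variable {V : Type*} [Fintype V] [DecidableEq V]

private lemma mul_vecMulVec' (A : Matrix V V ℝ) (f g : V → ℝ) :
    A * vecMulVec f g = vecMulVec (A *ᵥ f) g := by
  ext i j
  simp only [Matrix.mul_apply, vecMulVec_apply, mulVec, dotProduct]
  rw [Finset.sum_mul]
  exact Finset.sum_congr rfl fun k _ => by ring

private lemma vecMulVec_mul' (A : Matrix V V ℝ) (f g : V → ℝ) :
    vecMulVec f g * A = vecMulVec f (Aᵀ *ᵥ g) := by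
  ext i j
  simp only [Matrix.mul_apply, vecMulVec_apply, mulVec, dotProduct, transpose_apply]
  rw [Finset.mul_sum]
  exact Finset.sum_congr rfl fun k _ => by ring

private lemma vecMulVec_mul_vecMulVec' (f g f' g' : V → ℝ) :
    vecMulVec f g * vecMulVec f' g' = (g ⬝ᵥ f') • vecMulVec f g' := by
  ext i j
  simp only [Matrix.mul_apply, vecMulVec_apply, Matrix.smul_apply, smul_eq_mul, dotProduct]
  rw [Finset.sum_mul]
  exact Finset.sum_congr rfl fun k _ => by ring

private lemma vecMulVec_transpose' (f g : V → ℝ) : (vecMulVec f g)ᵀ = vecMulVec g f := by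
  ext i j; simp [vecMulVec_apply, mul_comm]

private lemma smul_vecMulVec' (r : ℝ) (f g : V → ℝ) :
    vecMulVec (r • f) g = r • vecMulVec f g := by
  ext i j; simp [vecMulVec_apply, mul_assoc]

private lemma vecMulVec_smul'' (r : ℝ) (f g : V → ℝ) :
    vecMulVec f (r • g) = r • vecMulVec f g := by
  ext i j; simp [vecMulVec_apply]; ring

private lemma penrose_unique_s1 (A B C : Matrix V V ℝ)
    (h1 : A * B * A = A) (h2 : B * A * B = B)
    (h3 : (A * B)ᵀ = A * B) (h4 : (B * A)ᵀ = B * A)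
    (g1 : A * C * A = A) (g2 : C * A * C = C)
    (g3 : (A * C)ᵀ = A * C) (g4 : (C * A)ᵀ = C * A) : B = C := by
  have hAB : A * B = A * C := by
    calc A * B = (A * B)ᵀ := h3.symm
    _ = Bᵀ * Aᵀ := by rw [transpose_mul]
    _ = Bᵀ * (A * C * A)ᵀ := by rw [g1]
    _ = Bᵀ * (Aᵀ * (A * C)ᵀ) := by rw [transpose_mul]
    _ = (Bᵀ * Aᵀ) * (A * C) := by rw [g3]; noncomm_ring
    _ = (A * B)ᵀ * (A * C) := by rw [transpose_mul]
    _ = (A * B) * (A * C) := by rw [h3]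
    _ = (A * B * A) * C := by noncomm_ring
    _ = A * C := by rw [h1]
  have hBA : B * A = C * A := by
    calc B * A = (B * A)ᵀ := h4.symm
    _ = Aᵀ * Bᵀ := by rw [transpose_mul]
    _ = (A * C * A)ᵀ * Bᵀ := by rw [g1]
    _ = ((C * A)ᵀ * Aᵀ) * Bᵀ := by rw [mul_assoc A C A, transpose_mul]
    _ = (C * A) * (Aᵀ * Bᵀ) := by rw [g4]; noncomm_ring
    _ = (C * A) * (B * A)ᵀ := by rw [transpose_mul]
    _ = (C * A) * (B * A) := by rw [h4]
    _ = C * (A * B * A) := by noncomm_ring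
    _ = C * A := by rw [h1]
  calc B = B * A * B := h2.symm
  _ = C * A * B := by rw [hBA]
  _ = C * (A * B) := by rw [mul_assoc]
  _ = C * (A * C) := by rw [hAB]
  _ = C * A * C := by rw [mul_assoc]
  _ = C := g2

private lemma Matrix.mpinv_eq' (A B : Matrix V V ℝ)
    (h1 : A * B * A = A) (h2 : B * A * B = B)
    (h3 : (A * B)ᵀ = A * B) (h4 : (B * A)ᵀ = B * A) :
    A.mpinv = B := by
  have hex : ∃ C : Matrix V V ℝ,
      A * C * A = A ∧ C * A * C = C ∧ (A * C)ᵀ = A * C ∧ (C * A)ᵀ = C * A :=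
    ⟨B, h1, h2, h3, h4⟩
  rw [Matrix.mpinv, dif_pos hex]
  obtain ⟨g1, g2, g3, g4⟩ := hex.choose_spec
  exact penrose_unique_s1 A _ B g1 g2 g3 g4 h1 h2 h3 h4

private lemma complete_of_card {ι : Type*} [Fintype ι] [DecidableEq ι]
    (hcard : Fintype.card ι = Fintype.card V) (w : ι → V → ℝ)
    (horth : ∀ i j, w i ⬝ᵥ w j = if i = j then 1 else 0) :
    ∑ i, vecMulVec (w i) (w i) = 1 := by
  obtain ⟨e⟩ : Nonempty (ι ≃ V) := ⟨Fintype.equivOfCardEq hcard⟩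
  set U : Matrix V V ℝ := Matrix.of fun a b => w (e.symm a) b with hU
  have h1 : U * Uᵀ = 1 := by
    ext a b
    simp only [Matrix.mul_apply, transpose_apply, hU, Matrix.of_apply, Matrix.one_apply]
    have := horth (e.symm a) (e.symm b)
    simp only [dotProduct] at this
    rw [this]
    by_cases h : a = b
    · simp [h]
    · rw [if_neg (fun hc => h (by simpa using congrArg e hc)), if_neg h]
  have h2 : Uᵀ * U = 1 := mul_eq_one_comm.mp h1
  ext a b
  have := congrFun (congrFun h2 a) b
  simp only [Matrix.mul_apply, transpose_apply, hU, Matrix.of_apply] at this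
  show (∑ i, vecMulVec (w i) (w i)) a b = (1 : Matrix V V ℝ) a b
  rw [Matrix.sum_apply]
  simp only [vecMulVec_apply]
  rw [← Equiv.sum_comp e.symm (fun i => w i a * w i b)]
  exact this

private lemma mpinv_spectral {ι κ : Type*} [Fintype ι] [DecidableEq ι] [Fintype κ]
    (A : Matrix V V ℝ) (hA : Aᵀ = A)
    (c : ι → ℝ) (w : ι → V → ℝ) (z : κ → V → ℝ)
    (hc : ∀ i, c i ≠ 0)
    (hw : ∀ i, A *ᵥ w i = c i • w i)
    (hz : ∀ k, A *ᵥ z k = 0)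
    (horth : ∀ i j, w i ⬝ᵥ w j = if i = j then 1 else 0)
    (hcomp : ∑ i, vecMulVec (w i) (w i) + ∑ k, vecMulVec (z k) (z k) = 1) :
    A.mpinv = ∑ i, (c i)⁻¹ • vecMulVec (w i) (w i) := by
  set P : Matrix V V ℝ := ∑ i, vecMulVec (w i) (w i) with hP
  set B : Matrix V V ℝ := ∑ i, (c i)⁻¹ • vecMulVec (w i) (w i) with hB
  have hAB : A * B = P := by
    rw [hB, Finset.mul_sum]
    refine Finset.sum_congr rfl fun i _ => ?_
    rw [Matrix.mul_smul, mul_vecMulVec', hw i, smul_vecMulVec', smul_smul,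
      inv_mul_cancel₀ (hc i), one_smul]
  have hBA : B * A = P := by
    rw [hB, Finset.sum_mul]
    refine Finset.sum_congr rfl fun i _ => ?_
    rw [Matrix.smul_mul, vecMulVec_mul', hA, hw i, vecMulVec_smul'', smul_smul,
      inv_mul_cancel₀ (hc i), one_smul]
  have hAP : A * P = ∑ i, c i • vecMulVec (w i) (w i) := by
    rw [hP, Finset.mul_sum]
    exact Finset.sum_congr rfl fun i _ => by rw [mul_vecMulVec', hw i, smul_vecMulVec']
  have hPA : P * A = ∑ i, c i • vecMulVec (w i) (w i) := by
    rw [hP, Finset.sum_mul]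
    exact Finset.sum_congr rfl fun i _ => by rw [vecMulVec_mul', hA, hw i, vecMulVec_smul'']
  have hAPA : A * P = A := by
    have h0 : A * (P + ∑ k, vecMulVec (z k) (z k)) = A := by rw [hcomp, Matrix.mul_one]
    rw [Matrix.mul_add] at h0
    have hz' : A * ∑ k, vecMulVec (z k) (z k) = 0 := by
      rw [Finset.mul_sum]
      refine Finset.sum_eq_zero fun k _ => ?_
      rw [mul_vecMulVec', hz k]
      ext a b; simp [vecMulVec_apply]
    rw [hz', add_zero] at h0
    exact h0
  have hPs : Pᵀ = P := by
    rw [hP, Matrix.transpose_sum]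
    exact Finset.sum_congr rfl fun i _ => vecMulVec_transpose' _ _
  have hPB : P * B = B := by
    rw [hP, Finset.sum_mul]
    nth_rewrite 2 [hB]
    refine Finset.sum_congr rfl fun i _ => ?_
    rw [hB, Finset.mul_sum]
    rw [Finset.sum_eq_single i]
    · rw [Matrix.mul_smul, vecMulVec_mul_vecMulVec', horth, if_pos rfl, one_smul]
    · intro j _ hj
      rw [Matrix.mul_smul, vecMulVec_mul_vecMulVec', horth, if_neg hj.symm, zero_smul, smul_zero]
    · intro h; exact absurd (Finset.mem_univ i) h
  refine Matrix.mpinv_eq' A B ?_ ?_ ?_ ?_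
  · rw [hAB, hPA, ← hAP, hAPA]
  · rw [hBA, hPB]
  · rw [hAB, hPs]
  · rw [hBA, hPs]

private lemma effRes_spectral {ι : Type*} [Fintype ι]
    (L : Matrix V V ℝ) (c : ι → ℝ) (w : ι → V → ℝ)
    (h : L.mpinv = ∑ i, (c i)⁻¹ • vecMulVec (w i) (w i)) (u v : V) :
    effRes L u v = ∑ i, (w i u - w i v) ^ 2 / c i := by
  unfold effRes
  rw [h]
  set d : V → ℝ := Pi.single u 1 - Pi.single v 1 with hd
  have hdw : ∀ f : V → ℝ, f ⬝ᵥ d = f u - f v := by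
    intro f
    rw [hd, dotProduct_sub, dotProduct_single, dotProduct_single, mul_one, mul_one]
  have hdw' : ∀ f : V → ℝ, d ⬝ᵥ f = f u - f v := by
    intro f
    rw [hd, sub_dotProduct, single_dotProduct, single_dotProduct, one_mul, one_mul]
  have hmv : (∑ i, (c i)⁻¹ • vecMulVec (w i) (w i)) *ᵥ d
      = ∑ i, ((c i)⁻¹ * (w i u - w i v)) • w i := by
    ext a
    rw [mulVec, dotProduct]
    simp only [Matrix.sum_apply, Matrix.smul_apply, vecMulVec_apply, smul_eq_mul,
      Finset.sum_apply, Pi.smul_apply]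
    simp_rw [Finset.sum_mul]
    rw [Finset.sum_comm]
    refine Finset.sum_congr rfl fun i _ => ?_
    have h1 : ∑ x, (c i)⁻¹ * (w i a * w i x) * d x = (c i)⁻¹ * (w i a * (w i ⬝ᵥ d)) := by
      rw [dotProduct, Finset.mul_sum, Finset.mul_sum]
      exact Finset.sum_congr rfl fun x _ => by ring
    rw [h1, hdw]
    ring
  rw [hmv]
  have h2 : d ⬝ᵥ (∑ i, ((c i)⁻¹ * (w i u - w i v)) • w i)
      = ∑ i, ((c i)⁻¹ * (w i u - w i v)) * (d ⬝ᵥ w i) := by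
    rw [dotProduct]
    simp only [Finset.sum_apply, Pi.smul_apply, smul_eq_mul]
    simp_rw [Finset.mul_sum]
    rw [Finset.sum_comm]
    refine Finset.sum_congr rfl fun i _ => ?_
    rw [dotProduct, Finset.mul_sum]
    exact Finset.sum_congr rfl fun x _ => by ring
  rw [h2]
  refine Finset.sum_congr rfl fun i _ => ?_
  rw [hdw']
  ring

open scoped Classical in
private lemma lapm_apply' (G : SimpleGraph V) (i j : V) :
    lapm G i j = (if i = j then ∑ k, (if G.Adj i k then (1:ℝ) else 0) else 0)
      - (if G.Adj i j then 1 else 0) := by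
  unfold lapm
  simp only [SimpleGraph.lapMatrix, SimpleGraph.degMatrix, Matrix.sub_apply,
    Matrix.diagonal_apply, SimpleGraph.adjMatrix_apply]
  rw [SimpleGraph.degree_eq_sum_if_adj]

private lemma lapm_symm (G : SimpleGraph V) : (lapm G)ᵀ = lapm G := by
  letI := Classical.decRel G.Adj
  unfold lapm
  exact SimpleGraph.isSymm_lapMatrix (R := ℝ) (G := G)

private lemma lapm_mulVec_const (G : SimpleGraph V) (r : ℝ) :
    lapm G *ᵥ (fun _ => r) = 0 := by
  have h : (fun _ : V => r) = r • (fun _ : V => (1:ℝ)) := by ext; simp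
  rw [h, Matrix.mulVec_smul]
  unfold lapm
  rw [SimpleGraph.lapMatrix_mulVec_const_eq_zero]
  simp

private lemma eigvec_sum_zero (G : SimpleGraph V) (lam : ℝ) (f : V → ℝ) (hlam : lam ≠ 0)
    (hf : lapm G *ᵥ f = lam • f) : ∑ u, f u = 0 := by
  have h1 : ∑ u, (lapm G *ᵥ f) u = lam * ∑ u, f u := by
    rw [hf]; simp [Finset.mul_sum]
  have h2 : ∑ u, (lapm G *ᵥ f) u = 0 := by
    have hcol : ∀ v, ∑ u, lapm G u v = 0 := by
      intro v
      have hr := congrFun (lapm_mulVec_const G 1) v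
      simp only [mulVec, dotProduct, mul_one, Pi.zero_apply] at hr
      calc ∑ u, lapm G u v = ∑ u, (lapm G)ᵀ v u := by simp [transpose_apply]
      _ = ∑ u, lapm G v u := by rw [lapm_symm]
      _ = 0 := hr
    simp only [mulVec, dotProduct]
    rw [Finset.sum_comm]
    refine Finset.sum_eq_zero fun v _ => ?_
    rw [← Finset.sum_mul, hcol v, zero_mul]
  rw [h2] at h1
  exact (mul_eq_zero.mp h1.symm).resolve_left hlam

end AuxVec

section AuxBox
variable {α β : Type*} [Fintype α] [DecidableEq α] [Fintype β] [DecidableEq β]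
  (G : SimpleGraph α) (H : SimpleGraph β)

open scoped Classical in
private lemma boxProd_deg_sum (u : α) (x : β) :
    (∑ p : α × β, if (G.boxProd H).Adj (u, x) p then (1:ℝ) else 0)
      = (∑ k, if G.Adj u k then (1:ℝ) else 0) + (∑ l, if H.Adj x l then (1:ℝ) else 0) := by
  rw [Fintype.sum_prod_type]
  have key : ∀ (k : α) (l : β), (if (G.boxProd H).Adj (u, x) (k, l) then (1:ℝ) else 0)
      = (if G.Adj u k ∧ x = l then (1:ℝ) else 0) + (if u = k ∧ H.Adj x l then (1:ℝ) else 0) := by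
    intro k l
    rw [SimpleGraph.boxProd_adj]
    by_cases h1 : G.Adj u k ∧ x = l <;> by_cases h2 : u = k ∧ H.Adj x l
    · exact absurd h1.1 (h2.1 ▸ G.irrefl)
    · simp [h1, h2]
    · simp [h1, h2]
    · simp only [h1, h2, if_false]; rw [if_neg (by tauto), zero_add]
  simp_rw [key, Finset.sum_add_distrib]
  congr 1
  · refine Finset.sum_congr rfl fun k _ => ?_
    by_cases h : G.Adj u k <;> simp [h]
  · rw [Finset.sum_comm]
    refine Finset.sum_congr rfl fun l _ => ?_
    by_cases h : H.Adj x l <;>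
      simp [h, Finset.sum_ite_eq, Finset.sum_ite_eq']

open scoped Classical in
private lemma lapm_boxProd (u v : α) (x y : β) :
    lapm (G.boxProd H) (u, x) (v, y)
      = lapm G u v * (if x = y then 1 else 0) + (if u = v then 1 else 0) * lapm H x y := by
  rw [lapm_apply', lapm_apply', lapm_apply', boxProd_deg_sum]
  by_cases huv : u = v <;> by_cases hxy : x = y
  · subst huv; subst hxy
    simp [Prod.ext_iff, SimpleGraph.boxProd_adj]
  · subst huv
    have h : ¬ ((u, x) = (u, y)) := by simp [Prod.ext_iff, hxy]
    simp [h, hxy, SimpleGraph.boxProd_adj, G.irrefl]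
  · subst hxy
    have h : ¬ ((u, x) = (v, x)) := by simp [Prod.ext_iff, huv]
    simp [h, huv, SimpleGraph.boxProd_adj, H.irrefl]
  · have h : ¬ ((u, x) = (v, y)) := by simp [Prod.ext_iff, huv]
    have h2 : ¬ (G.boxProd H).Adj (u, x) (v, y) := by
      simp [SimpleGraph.boxProd_adj, huv, hxy]
    simp [h, huv, hxy, h2]

private lemma lapm_boxProd_mulVec (f : α × β → ℝ) (u : α) (x : β) :
    (lapm (G.boxProd H) *ᵥ f) (u, x)
      = (lapm G *ᵥ fun v => f (v, x)) u + (lapm H *ᵥ fun y => f (u, y)) x := by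
  classical
  simp only [mulVec, dotProduct]
  rw [Fintype.sum_prod_type]
  have key : ∀ (v : α) (y : β), lapm (G.boxProd H) (u, x) (v, y) * f (v, y)
      = lapm G u v * (if x = y then 1 else 0) * f (v, y)
        + (if u = v then 1 else 0) * lapm H x y * f (v, y) := by
    intro v y; rw [lapm_boxProd]; ring
  simp_rw [key, Finset.sum_add_distrib]
  congr 1
  · refine Finset.sum_congr rfl fun v _ => ?_
    have h : ∀ y, (lapm G u v * if x = y then 1 else 0) * f (v, y)
        = if x = y then lapm G u v * f (v, y) else 0 := fun y => by split_ifs <;> ring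
    simp_rw [h]
    simp
  · rw [Finset.sum_comm]
    refine Finset.sum_congr rfl fun y _ => ?_
    have h : ∀ v, (if u = v then 1 else 0) * lapm H x y * f (v, y)
        = if u = v then lapm H x y * f (v, y) else 0 := fun v => by split_ifs <;> ring
    simp_rw [h]
    simp

private lemma box_eig (f : α → ℝ) (g : β → ℝ) (a b : ℝ)
    (hf : lapm G *ᵥ f = a • f) (hg : lapm H *ᵥ g = b • g) :
    lapm (G.boxProd H) *ᵥ (fun ux : α × β => f ux.1 * g ux.2)
      = (a + b) • (fun ux : α × β => f ux.1 * g ux.2) := by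
  ext ⟨u, x⟩
  rw [lapm_boxProd_mulVec]
  have h1 : ∑ v, lapm G u v * f v = a * f u := by
    have := congrFun hf u; simpa [mulVec, dotProduct] using this
  have h2 : ∑ y, lapm H x y * g y = b * g x := by
    have := congrFun hg x; simpa [mulVec, dotProduct] using this
  have e1 : (lapm G *ᵥ fun v => f v * g x) u = (∑ v, lapm G u v * f v) * g x := by
    simp only [mulVec, dotProduct]
    rw [Finset.sum_mul]
    exact Finset.sum_congr rfl fun v _ => by ring
  have e2 : (lapm H *ᵥ fun y => f u * g y) x = f u * (∑ y, lapm H x y * g y) := by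
    simp only [mulVec, dotProduct]
    rw [Finset.mul_sum]
    exact Finset.sum_congr rfl fun y _ => by ring
  rw [e1, e2, h1, h2]
  simp only [Pi.smul_apply, smul_eq_mul]
  ring

private lemma dot_factor (f f' : α → ℝ) (g g' : β → ℝ) :
    (fun ux : α × β => f ux.1 * g ux.2) ⬝ᵥ (fun ux : α × β => f' ux.1 * g' ux.2)
      = (f ⬝ᵥ f') * (g ⬝ᵥ g') := by
  simp only [dotProduct]
  rw [Fintype.sum_prod_type, Finset.sum_mul]
  refine Finset.sum_congr rfl fun u _ => ?_
  rw [Finset.mul_sum]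
  exact Finset.sum_congr rfl fun x _ => by ring

end AuxBox

private lemma resDist_spectral {n : ℕ} {ι : Type} [Fintype ι] [DecidableEq ι]
    (G : SimpleGraph (Fin n)) (hcard : Fintype.card ι + 1 = n)
    (lam : ι → ℝ) (Psi : ι → Fin n → ℝ)
    (hlam : ∀ p, lam p ≠ 0)
    (hPsi : ∀ p, lapm G *ᵥ Psi p = lam p • Psi p)
    (hOrth : ∀ p p', Psi p ⬝ᵥ Psi p' = if p = p' then 1 else 0)
    (u v : Fin n) :
    resDist G u v = ∑ p, (Psi p u - Psi p v) ^ 2 / lam p := by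
  classical
  have hn : 0 < n := by omega
  have hn0 : (n : ℝ) ≠ 0 := Nat.cast_ne_zero.mpr hn.ne'
  set s : ℝ := (Real.sqrt n)⁻¹ with hs
  have hss : s * s = 1 / n := by
    rw [hs, ← mul_inv]
    rw [Real.mul_self_sqrt (by positivity)]
    rw [one_div]
  have hsum0 : ∀ p, ∑ a, Psi p a = 0 := fun p =>
    eigvec_sum_zero G (lam p) (Psi p) (hlam p) (hPsi p)
  have hPc : ∀ p, Psi p ⬝ᵥ (fun _ => s) = 0 := by
    intro p
    simp only [dotProduct]
    rw [← Finset.sum_mul, hsum0 p, zero_mul]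
  have hcP : ∀ p, (fun _ : Fin n => s) ⬝ᵥ Psi p = 0 := by
    intro p
    rw [dotProduct_comm]
    exact hPc p
  have hcc : (fun _ : Fin n => s) ⬝ᵥ (fun _ : Fin n => s) = 1 := by
    simp only [dotProduct, hss]
    rw [Finset.sum_const, Finset.card_univ, Fintype.card_fin]
    rw [nsmul_eq_mul]; field_simp
  set W : ι ⊕ Unit → Fin n → ℝ := Sum.elim Psi (fun _ _ => s) with hW
  have horthW : ∀ i j, W i ⬝ᵥ W j = if i = j then 1 else 0 := by
    rintro (p | ⟨⟩) (p' | ⟨⟩)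
    · rw [hW]; simp only [Sum.elim_inl]
      rw [hOrth]
      by_cases h : p = p' <;> simp [h]
    · rw [hW]; simp only [Sum.elim_inl, Sum.elim_inr]
      rw [hPc]; simp
    · rw [hW]; simp only [Sum.elim_inl, Sum.elim_inr]
      rw [hcP]; simp
    · rw [hW]; simp only [Sum.elim_inr]
      rw [hcc]; simp
  have hcards : Fintype.card (ι ⊕ Unit) = Fintype.card (Fin n) := by
    simp [Fintype.card_sum, hcard]
  have hcomp := complete_of_card hcards W horthW
  rw [Fintype.sum_sum_type] at hcomp
  simp only [hW, Sum.elim_inl, Sum.elim_inr] at hcomp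
  have hmp := mpinv_spectral (lapm G) (lapm_symm G) lam Psi (fun _ _ => s)
    hlam hPsi (fun _ => lapm_mulVec_const G s) hOrth hcomp
  exact effRes_spectral (lapm G) lam Psi hmp u v

/-- Resistance distances in a Cartesian product in terms of spectral data of the factors. -/
theorem resDist_boxProd_spectral (n m : ℕ) (hn : 0 < n) (hm : 0 < m)
    (G : SimpleGraph (Fin n)) (H : SimpleGraph (Fin m))
    (hG : G.Connected) (hH : H.Connected)
    (lam : Fin (n - 1) → ℝ) (mu : Fin (m - 1) → ℝ)
    (Psi : Fin (n - 1) → Fin n → ℝ) (Phi : Fin (m - 1) → Fin m → ℝ)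
    (hlam : ∀ p, 0 < lam p) (hmu : ∀ q, 0 < mu q)
    (hPsi : ∀ p, lapm G *ᵥ Psi p = lam p • Psi p)
    (hPhi : ∀ q, lapm H *ᵥ Phi q = mu q • Phi q)
    (hPsiOrth : ∀ p p', Psi p ⬝ᵥ Psi p' = if p = p' then 1 else 0)
    (hPhiOrth : ∀ q q', Phi q ⬝ᵥ Phi q' = if q = q' then 1 else 0) :
    ∀ (u v : Fin n) (x y : Fin m),
      resDist (G.boxProd H) (u, x) (v, y)
        = (1 / m) * resDist G u v + (1 / n) * resDist H x y
          + ∑ p : Fin (n - 1), ∑ q : Fin (m - 1),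
              (Psi p u * Phi q x - Psi p v * Phi q y) ^ 2 / (lam p + mu q) := by
  classical
  intro u v x y
  have hn0 : (n : ℝ) ≠ 0 := Nat.cast_ne_zero.mpr hn.ne'
  have hm0 : (m : ℝ) ≠ 0 := Nat.cast_ne_zero.mpr hm.ne'
  set sn : ℝ := (Real.sqrt n)⁻¹ with hsn
  set sm : ℝ := (Real.sqrt m)⁻¹ with hsm
  have hsn2 : sn * sn = 1 / n := by
    rw [hsn, ← mul_inv, Real.mul_self_sqrt (by positivity), one_div]
  have hsm2 : sm * sm = 1 / m := by
    rw [hsm, ← mul_inv, Real.mul_self_sqrt (by positivity), one_div]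
  -- base dot-product facts
  have hsumG : ∀ p, ∑ a, Psi p a = 0 := fun p =>
    eigvec_sum_zero G (lam p) (Psi p) (hlam p).ne' (hPsi p)
  have hsumH : ∀ q, ∑ a, Phi q a = 0 := fun q =>
    eigvec_sum_zero H (mu q) (Phi q) (hmu q).ne' (hPhi q)
  have hPcG : ∀ p, Psi p ⬝ᵥ (fun _ => sn) = 0 := by
    intro p; simp only [dotProduct]; rw [← Finset.sum_mul, hsumG p, zero_mul]
  have hcPG : ∀ p, (fun _ : Fin n => sn) ⬝ᵥ Psi p = 0 := by
    intro p; rw [dotProduct_comm]; exact hPcG p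
  have hccG : (fun _ : Fin n => sn) ⬝ᵥ (fun _ : Fin n => sn) = 1 := by
    simp only [dotProduct, hsn2]
    rw [Finset.sum_const, Finset.card_univ, Fintype.card_fin]
    rw [nsmul_eq_mul]; field_simp
  have hPcH : ∀ q, Phi q ⬝ᵥ (fun _ => sm) = 0 := by
    intro q; simp only [dotProduct]; rw [← Finset.sum_mul, hsumH q, zero_mul]
  have hcPH : ∀ q, (fun _ : Fin m => sm) ⬝ᵥ Phi q = 0 := by
    intro q; rw [dotProduct_comm]; exact hPcH q
  have hccH : (fun _ : Fin m => sm) ⬝ᵥ (fun _ : Fin m => sm) = 1 := by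
    simp only [dotProduct, hsm2]
    rw [Finset.sum_const, Finset.card_univ, Fintype.card_fin]
    rw [nsmul_eq_mul]; field_simp
  have hconstG : lapm G *ᵥ (fun _ : Fin n => sn) = (0:ℝ) • (fun _ : Fin n => sn) := by
    rw [lapm_mulVec_const, zero_smul]
  have hconstH : lapm H *ᵥ (fun _ : Fin m => sm) = (0:ℝ) • (fun _ : Fin m => sm) := by
    rw [lapm_mulVec_const, zero_smul]
  -- the eigen-family for the box product
  set w : ((Fin (n - 1) × Fin (m - 1)) ⊕ (Fin (n - 1) ⊕ Fin (m - 1))) → Fin n × Fin m → ℝ :=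
    Sum.elim (fun pq ux => Psi pq.1 ux.1 * Phi pq.2 ux.2)
      (Sum.elim (fun p ux => Psi p ux.1 * sm) (fun q ux => sn * Phi q ux.2)) with hw
  set c : ((Fin (n - 1) × Fin (m - 1)) ⊕ (Fin (n - 1) ⊕ Fin (m - 1))) → ℝ :=
    Sum.elim (fun pq => lam pq.1 + mu pq.2) (Sum.elim lam mu) with hc
  set z : Unit → Fin n × Fin m → ℝ := fun _ ux => sn * sm with hz
  have hcne : ∀ i, c i ≠ 0 := by
    rintro (⟨p, q⟩ | p | q) <;> simp only [hc, Sum.elim_inl, Sum.elim_inr]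
    · exact (add_pos (hlam p) (hmu q)).ne'
    · exact (hlam p).ne'
    · exact (hmu q).ne'
  have hweig : ∀ i, lapm (G.boxProd H) *ᵥ w i = c i • w i := by
    rintro (⟨p, q⟩ | p | q)
    · exact box_eig G H (Psi p) (Phi q) (lam p) (mu q) (hPsi p) (hPhi q)
    · have := box_eig G H (Psi p) (fun _ => sm) (lam p) 0 (hPsi p) hconstH
      simpa [hw, hc] using this
    · have := box_eig G H (fun _ => sn) (Phi q) 0 (mu q) hconstG (hPhi q)
      simpa [hw, hc] using this
  have hzeig : ∀ k : Unit, lapm (G.boxProd H) *ᵥ z k = 0 := by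
    intro _
    have := box_eig G H (fun _ : Fin n => sn) (fun _ : Fin m => sm) 0 0 hconstG hconstH
    simpa using this
  have horthw : ∀ i j, w i ⬝ᵥ w j = if i = j then 1 else 0 := by
    rintro (⟨p, q⟩ | p | q) (⟨p', q'⟩ | p' | q')
    · refine (dot_factor (Psi p) (Psi p') (Phi q) (Phi q')).trans ?_
      rw [hPsiOrth, hPhiOrth]
      by_cases h1 : p = p' <;> by_cases h2 : q = q' <;>
        simp [h1, h2, Prod.ext_iff]
    · refine (dot_factor (Psi p) (Psi p') (Phi q) (fun _ => sm)).trans ?_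
      rw [hPcH]; simp
    · refine (dot_factor (Psi p) (fun _ => sn) (Phi q) (Phi q')).trans ?_
      rw [hPcG]; simp
    · refine (dot_factor (Psi p) (Psi p') (fun _ => sm) (Phi q')).trans ?_
      rw [hPsiOrth]
      by_cases h1 : p = p' <;> simp [h1, hcPH q']
    · refine (dot_factor (Psi p) (Psi p') (fun _ => sm) (fun _ => sm)).trans ?_
      rw [hPsiOrth, hccH]
      by_cases h1 : p = p' <;> simp [h1]
    · refine (dot_factor (Psi p) (fun _ => sn) (fun _ => sm) (Phi q')).trans ?_
      rw [hPcG]; simp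
    · refine (dot_factor (fun _ => sn) (Psi p') (Phi q) (Phi q')).trans ?_
      rw [hcPG]; simp
    · refine (dot_factor (fun _ => sn) (Psi p') (Phi q) (fun _ => sm)).trans ?_
      rw [hcPG]; simp
    · refine (dot_factor (fun _ => sn) (fun _ => sn) (Phi q) (Phi q')).trans ?_
      rw [hPhiOrth, hccG]
      by_cases h2 : q = q' <;> simp [h2]
  set W : (((Fin (n - 1) × Fin (m - 1)) ⊕ (Fin (n - 1) ⊕ Fin (m - 1))) ⊕ Unit) → Fin n × Fin m → ℝ :=
    Sum.elim w z with hWdef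
  have horthW : ∀ i j, W i ⬝ᵥ W j = if i = j then 1 else 0 := by
    rintro (i | ⟨⟩) (j | ⟨⟩)
    · simp only [hWdef, Sum.elim_inl]
      rw [horthw]
      by_cases h : i = j <;> simp [h]
    · simp only [hWdef, Sum.elim_inl, Sum.elim_inr]
      rcases i with (⟨p, q⟩ | p | q)
      · refine (dot_factor (Psi p) (fun _ => sn) (Phi q) (fun _ => sm)).trans ?_
        rw [hPcG]; simp
      · refine (dot_factor (Psi p) (fun _ => sn) (fun _ => sm) (fun _ => sm)).trans ?_
        rw [hPcG]; simp
      · refine (dot_factor (fun _ => sn) (fun _ => sn) (Phi q) (fun _ => sm)).trans ?_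
        rw [hPcH]; simp
    · simp only [hWdef, Sum.elim_inl, Sum.elim_inr]
      rcases j with (⟨p, q⟩ | p | q)
      · refine (dot_factor (fun _ => sn) (Psi p) (fun _ => sm) (Phi q)).trans ?_
        rw [hcPG]; simp
      · refine (dot_factor (fun _ => sn) (Psi p) (fun _ => sm) (fun _ => sm)).trans ?_
        rw [hcPG]; simp
      · refine (dot_factor (fun _ => sn) (fun _ => sn) (fun _ => sm) (Phi q)).trans ?_
        rw [hcPH]; simp
    · simp only [hWdef, Sum.elim_inr]
      refine (dot_factor (fun _ => sn) (fun _ => sn) (fun _ => sm) (fun _ => sm)).trans ?_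
      rw [hccG, hccH]; simp
  have hcards : Fintype.card ((((Fin (n - 1) × Fin (m - 1)) ⊕ (Fin (n - 1) ⊕ Fin (m - 1))) ⊕ Unit))
      = Fintype.card (Fin n × Fin m) := by
    obtain ⟨n', rfl⟩ : ∃ n', n = n' + 1 := ⟨n - 1, by omega⟩
    obtain ⟨m', rfl⟩ : ∃ m', m = m' + 1 := ⟨m - 1, by omega⟩
    simp [Fintype.card_sum, Fintype.card_prod]
    ring
  have hcomp := complete_of_card hcards W horthW
  rw [Fintype.sum_sum_type] at hcomp
  simp only [hWdef, Sum.elim_inl, Sum.elim_inr] at hcomp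
  have hmp := mpinv_spectral (lapm (G.boxProd H)) (lapm_symm _) c w z
    hcne hweig hzeig horthw hcomp
  have hres := effRes_spectral (lapm (G.boxProd H)) c w hmp (u, x) (v, y)
  have hresG := resDist_spectral G (by rw [Fintype.card_fin]; omega) lam Psi (fun p => (hlam p).ne') hPsi hPsiOrth u v
  have hresH := resDist_spectral H (by rw [Fintype.card_fin]; omega) mu Phi (fun q => (hmu q).ne') hPhi hPhiOrth x y
  show effRes (lapm (G.boxProd H)) (u, x) (v, y) = _
  rw [hres]
  rw [Fintype.sum_sum_type, Fintype.sum_sum_type, Fintype.sum_prod_type]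
  simp only [hw, hc, Sum.elim_inl, Sum.elim_inr]
  rw [hresG, hresH]
  have eG : ∑ p : Fin (n - 1), (Psi p u * sm - Psi p v * sm) ^ 2 / lam p
      = (1 / m) * ∑ p : Fin (n - 1), (Psi p u - Psi p v) ^ 2 / lam p := by
    rw [Finset.mul_sum]
    refine Finset.sum_congr rfl fun p _ => ?_
    have : (Psi p u * sm - Psi p v * sm) ^ 2 = (1 / m) * (Psi p u - Psi p v) ^ 2 := by
      rw [← hsm2]; ring
    rw [this]
    ring
  have eH : ∑ q : Fin (m - 1), (sn * Phi q x - sn * Phi q y) ^ 2 / mu q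
      = (1 / n) * ∑ q : Fin (m - 1), (Phi q x - Phi q y) ^ 2 / mu q := by
    rw [Finset.mul_sum]
    refine Finset.sum_congr rfl fun q _ => ?_
    have : (sn * Phi q x - sn * Phi q y) ^ 2 = (1 / n) * (Phi q x - Phi q y) ^ 2 := by
      rw [← hsn2]; ring
    rw [this]
    ring
  rw [eG, eH]
  ring
end

section
/- For the weighted fan graphs C^m_{P_n} and C^m_{P_{n+1}} (apex b joined with conductance m > 1 to every vertex of the path), the difference of end-to-end effective resistances satisfies 0 < R_{C^m_{P_{n+1}}}[a_1, a_{n+1}] − R_{C^m_{P_n}}[a_1, a_n] < 2/m^n. -/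
open Matrix Finset

lemma exists_pinv {k : Type*} [Fintype k] [DecidableEq k] (A : Matrix k k ℝ) (hA : Aᵀ = A) :
    ∃ B : Matrix k k ℝ,
      A * B * A = A ∧ B * A * B = B ∧ (A * B)ᵀ = A * B ∧ (B * A)ᵀ = B * A := by
  have hH : A.IsHermitian := by
    rw [Matrix.IsHermitian, Matrix.conjTranspose_eq_transpose_of_trivial, hA]
  set U : Matrix k k ℝ := (hH.eigenvectorUnitary : Matrix k k ℝ) with hU
  have hUU : star U * U = 1 := Unitary.coe_star_mul_self _
  set d : k → ℝ := hH.eigenvalues with hd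
  have hspec : A = U * Matrix.diagonal d * star U := by
    simpa using hH.spectral_theorem
  set B : Matrix k k ℝ := U * Matrix.diagonal (fun i => (d i)⁻¹) * star U with hB
  have key : ∀ e f : k → ℝ, (U * diagonal e * star U) * (U * diagonal f * star U)
      = U * diagonal (fun i => e i * f i) * star U := by
    intro e f
    calc (U * diagonal e * star U) * (U * diagonal f * star U)
        = U * (diagonal e * (star U * U) * diagonal f) * star U := by noncomm_ring
      _ = U * diagonal (fun i => e i * f i) * star U := by
          rw [hUU, mul_one, Matrix.diagonal_mul_diagonal]
  have hsymm : ∀ e : k → ℝ, (U * diagonal e * star U)ᵀ = U * diagonal e * star U := by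
    intro e
    have : star U = Uᵀ := Matrix.conjTranspose_eq_transpose_of_trivial U
    rw [this, Matrix.transpose_mul, Matrix.transpose_mul, Matrix.transpose_transpose,
      Matrix.diagonal_transpose, mul_assoc]
  have hAB : A * B = U * diagonal (fun i => d i * (d i)⁻¹) * star U := by
    rw [hspec, hB, key]
  have hBA : B * A = U * diagonal (fun i => d i * (d i)⁻¹) * star U := by
    rw [hspec, hB, key]
    congr 1; congr 1; congr 1; ext i; ring
  refine ⟨B, ?_, ?_, ?_, ?_⟩
  · rw [hAB, hspec, key]
    congr 1; congr 1; congr 1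
    ext i
    by_cases h : d i = 0 <;> field_simp [h]
  · rw [hBA, hB, key]
    congr 1; congr 1; congr 1
    ext i
    by_cases h : d i = 0 <;> field_simp [h]
  · rw [hAB]; exact hsymm _
  · rw [hBA]; exact hsymm _

lemma effRes_eq_of_solution {k : Type*} [Fintype k] [DecidableEq k] (L : Matrix k k ℝ)
    (hL : Lᵀ = L) (u v : k) (x : k → ℝ)
    (hx : L *ᵥ x = Pi.single u 1 - Pi.single v 1) :
    effRes L u v = x u - x v := by
  have hex := exists_pinv L hL
  have hpen : L * L.mpinv * L = L := by
    rw [Matrix.mpinv, dif_pos hex]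
    exact hex.choose_spec.1
  set B := L.mpinv with hB
  have : (Pi.single u 1 - Pi.single v 1) ⬝ᵥ (B *ᵥ (Pi.single u 1 - Pi.single v 1))
      = x ⬝ᵥ ((Lᵀ * B * L) *ᵥ x) := by
    rw [← hx, Matrix.mulVec_mulVec, ← Matrix.vecMul_transpose,
      Matrix.dotProduct_mulVec, Matrix.vecMul_vecMul, Matrix.dotProduct_mulVec,
      ← mul_assoc]
  rw [effRes, this, hL, hpen, hx]
  simp [dotProduct_sub, dotProduct_single]

lemma coneLap_symm {V : Type*} [Fintype V] [DecidableEq V]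
    (G : SimpleGraph V) (m : ℝ) : (coneLap G m)ᵀ = coneLap G m := by
  classical
  ext i j
  simp only [coneLap, Matrix.transpose_apply, Matrix.of_apply]
  rcases i with a | u <;> rcases j with b | v
  · by_cases h : a = b
    · subst h; rfl
    · have h' : b ≠ a := fun hh => h hh.symm
      simp only [Sum.inl.injEq, h, h', if_neg, if_false]
      by_cases hadj : G.Adj a b
      · rw [if_pos hadj, if_pos (G.adj_symm hadj)]
      · rw [if_neg hadj, if_neg (fun hh => hadj (G.adj_symm hh))]
  · simp
  · simp
  · rcases u; rcases v; rfl

-- row formulas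
lemma coneLap_mulVec_inl {V : Type*} [Fintype V] [DecidableEq V]
    (G : SimpleGraph V) [DecidableRel G.Adj] (m : ℝ) (y : V ⊕ Unit → ℝ) (a : V) :
    (coneLap G m *ᵥ y) (Sum.inl a)
      = (∑ b, if G.Adj a b then (1:ℝ) else 0) * y (Sum.inl a) + m * y (Sum.inl a)
        - (∑ b, if G.Adj a b then y (Sum.inl b) else 0) - m * y (Sum.inr ()) := by
  have key : ∀ c b : V, (@ite ℝ (G.Adj c b) (Classical.decRel G.Adj c b) 1 0)
      = if G.Adj c b then (1:ℝ) else 0 := by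
    intro c b; by_cases h : G.Adj c b <;> simp [h]
  simp only [coneLap, Matrix.mulVec, dotProduct, Matrix.of_apply]
  simp only [key]
  simp only [sub_mul, ite_mul, zero_mul]
  rw [Finset.sum_sub_distrib, Finset.sum_ite_eq, if_pos (Finset.mem_univ _)]
  simp only [Fintype.sum_sum_type, Finset.univ_unique, Finset.sum_singleton]
  have h1 : ∀ b : V, (if G.Adj a b then (1:ℝ) else 0) * y (Sum.inl b)
      = (if G.Adj a b then y (Sum.inl b) else 0) := by
    intro b; by_cases h : G.Adj a b <;> simp [h]
  have h2 : ∑ x : V, (if G.Adj a x then (1:ℝ) else 0) * y (Sum.inl x)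
      = ∑ x : V, (if G.Adj a x then y (Sum.inl x) else 0) :=
    Finset.sum_congr rfl fun b _ => h1 b
  rw [h2]
  ring

lemma coneLap_mulVec_inr {V : Type*} [Fintype V] [DecidableEq V]
    (G : SimpleGraph V) (m : ℝ) (y : V ⊕ Unit → ℝ) :
    (coneLap G m *ᵥ y) (Sum.inr ())
      = (Fintype.card V : ℝ) * m * y (Sum.inr ()) - m * ∑ b, y (Sum.inl b) := by
  simp only [coneLap, Matrix.mulVec, dotProduct, Matrix.of_apply]
  simp only [sub_mul, ite_mul, zero_mul]
  rw [Finset.sum_sub_distrib, Finset.sum_ite_eq, if_pos (Finset.mem_univ _)]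
  simp only [Fintype.sum_sum_type, Finset.univ_unique, Finset.sum_singleton]
  simp only [Finset.sum_const, Finset.card_univ, nsmul_eq_mul, mul_comm, Finset.mul_sum]
  ring_nf



lemma sum_ite_coe_eq {N : ℕ} (c : ℕ) (f : Fin N → ℝ) :
    ∑ b : Fin N, (if (b : ℕ) = c then f b else 0)
      = if h : c < N then f ⟨c, h⟩ else 0 := by
  by_cases h : c < N
  · rw [dif_pos h]
    rw [Finset.sum_eq_single (⟨c, h⟩ : Fin N)]
    · rw [if_pos rfl]
    · intro b _ hb
      rw [if_neg]
      intro hbc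
      exact hb (Fin.ext hbc)
    · intro habs; exact absurd (Finset.mem_univ _) habs
  · rw [dif_neg h]
    apply Finset.sum_eq_zero
    intro b _
    rw [if_neg]
    intro hbc
    exact h (hbc ▸ b.isLt)

lemma path_nbr_sum {N : ℕ} (a : Fin N) (f : Fin N → ℝ)
    [DecidableRel (SimpleGraph.pathGraph N).Adj] :
    ∑ b : Fin N, (if (SimpleGraph.pathGraph N).Adj a b then f b else 0)
      = (if h : (a:ℕ)+1 < N then f ⟨(a:ℕ)+1, h⟩ else 0)
        + (if (a:ℕ) ≠ 0 then f ⟨(a:ℕ)-1, Nat.lt_of_le_of_lt (Nat.sub_le _ _) a.isLt⟩ else 0) := by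
  have hterm : ∀ b : Fin N,
      (if (SimpleGraph.pathGraph N).Adj a b then f b else 0)
      = (if (b:ℕ) = (a:ℕ)+1 then f b else 0) + (if (b:ℕ) = (a:ℕ)-1 ∧ (a:ℕ) ≠ 0 then f b else 0) := by
    intro b
    have hb := b.isLt
    have ha := a.isLt
    by_cases h1 : (b:ℕ) = (a:ℕ)+1
    · have hn2 : ¬((b:ℕ) = (a:ℕ)-1 ∧ (a:ℕ) ≠ 0) := by omega
      have hadj : (SimpleGraph.pathGraph N).Adj a b := by
        rw [SimpleGraph.pathGraph_adj]; omega
      rw [if_pos h1, if_neg hn2, if_pos hadj, add_zero]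
    · by_cases h2 : (b:ℕ) = (a:ℕ)-1 ∧ (a:ℕ) ≠ 0
      · have hadj : (SimpleGraph.pathGraph N).Adj a b := by
          rw [SimpleGraph.pathGraph_adj]; omega
        rw [if_neg h1, if_pos h2, if_pos hadj, zero_add]
      · have hadj : ¬(SimpleGraph.pathGraph N).Adj a b := by
          rw [SimpleGraph.pathGraph_adj]; omega
        rw [if_neg h1, if_neg h2, if_neg hadj, add_zero]
  rw [Finset.sum_congr rfl fun b _ => hterm b, Finset.sum_add_distrib, sum_ite_coe_eq]
  congr 1
  by_cases h0 : (a:ℕ) ≠ 0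
  · have h3 : ∀ b : Fin N, (if (b:ℕ) = (a:ℕ)-1 ∧ (a:ℕ) ≠ 0 then f b else 0)
        = (if (b:ℕ) = (a:ℕ)-1 then f b else 0) := by
      intro b
      by_cases hb : (b:ℕ) = (a:ℕ)-1
      · rw [if_pos ⟨hb, h0⟩, if_pos hb]
      · rw [if_neg (fun hh => hb hh.1), if_neg hb]
    rw [Finset.sum_congr rfl fun b _ => h3 b, sum_ite_coe_eq,
      dif_pos (Nat.lt_of_le_of_lt (Nat.sub_le _ _) a.isLt), if_pos h0]
  · rw [if_neg h0]
    apply Finset.sum_eq_zero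
    intro b _
    exact if_neg (fun hh => h0 hh.2)

lemma sum_mu_zero {N : ℕ} (μ : ℝ) :
    ∑ b : Fin N, (μ^((b:ℕ)+1) - μ^(N-(b:ℕ))) = 0 := by
  rw [Finset.sum_sub_distrib, sub_eq_zero]
  rw [Fin.sum_univ_eq_sum_range (fun i => μ^(i+1)), Fin.sum_univ_eq_sum_range (fun i => μ^(N-i))]
  rw [← Finset.sum_range_reflect (fun i => μ^(i+1)) N]
  apply Finset.sum_congr rfl
  intro i hi
  rw [Finset.mem_range] at hi
  congr 1
  omega

lemma effRes_fan (N : ℕ) (hN : 1 ≤ N) (m μ : ℝ) (hμ0 : 0 < μ) (hμ1 : μ < 1)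
    (hq : μ^2 + 1 = (m+2)*μ) :
    effRes (coneLap (SimpleGraph.pathGraph N) m) (Sum.inl (⟨0, by omega⟩ : Fin N))
        (Sum.inl ⟨N-1, by omega⟩)
      = 2*(μ - μ^N) / ((1-μ)*(1+μ^N)) := by
  letI : DecidableRel (SimpleGraph.pathGraph N).Adj := Classical.decRel _
  have hd1 : (1:ℝ) - μ ≠ 0 := by nlinarith
  have hd2 : (0:ℝ) < 1 + μ^N := by positivity
  obtain ⟨C, hC⟩ : ∃ C : ℝ, C = 1/((1-μ)*(1+μ^N)) := ⟨_, rfl⟩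
  set x : Fin N ⊕ Unit → ℝ := fun r => match r with
    | Sum.inl i => C * (μ^((i:ℕ)+1) - μ^(N-(i:ℕ)))
    | Sum.inr _ => 0 with hxdef
  have hx : coneLap (SimpleGraph.pathGraph N) m *ᵥ x
      = Pi.single (Sum.inl (⟨0, by omega⟩ : Fin N)) 1 - Pi.single (Sum.inl ⟨N-1, by omega⟩) 1 := by
    funext r
    rcases r with a | u
    · rw [coneLap_mulVec_inl]
      rw [path_nbr_sum a (fun _ => (1:ℝ)), path_nbr_sum a (fun b => x (Sum.inl b))]
      have hxa : x (Sum.inl a) = C * (μ^((a:ℕ)+1) - μ^(N-(a:ℕ))) := rfl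
      have hxb : x (Sum.inr ()) = 0 := rfl
      have hrhs : ((Pi.single (Sum.inl (⟨0, by omega⟩ : Fin N)) 1 : Fin N ⊕ Unit → ℝ)
            - (Pi.single (Sum.inl (⟨N-1, by omega⟩ : Fin N)) 1 : Fin N ⊕ Unit → ℝ)) (Sum.inl a)
          = (if (a:ℕ) = 0 then 1 else 0) - (if (a:ℕ) = N-1 then 1 else 0) := by
        have hsingle : ∀ (c : ℕ) (hc : c < N),
            (if (Sum.inl a : Fin N ⊕ Unit) = Sum.inl (⟨c, hc⟩ : Fin N) then (1:ℝ) else 0)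
              = if (a:ℕ) = c then 1 else 0 := by
          intro c hc
          by_cases h : (a:ℕ) = c
          · rw [if_pos (congrArg Sum.inl (Fin.ext h)), if_pos h]
          · rw [if_neg (fun hh => h (congrArg Fin.val (Sum.inl_injective hh))), if_neg h]
        simp only [Pi.sub_apply, Pi.single_apply]
        rw [hsingle 0 (by omega), hsingle (N-1) (by omega)]
      rw [hrhs, hxa, hxb]
      have hCden : C * ((1-μ)*(1+μ^N)) = 1 := by
        rw [hC]; field_simp
      have ha := a.isLt
      by_cases h1 : (a:ℕ)+1 < N
      · have hx1 : x (Sum.inl (⟨(a:ℕ)+1, h1⟩ : Fin N)) = C * (μ^((a:ℕ)+1+1) - μ^(N-((a:ℕ)+1))) := rfl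
        rw [dif_pos h1, dif_pos h1, hx1]
        by_cases h0 : (a:ℕ) = 0
        · -- left endpoint, N ≥ 2
          obtain ⟨k, hk⟩ : ∃ k, N = k+2 := ⟨N-2, by omega⟩
          rw [if_neg (fun hh => hh h0), if_neg (fun hh => hh h0), if_pos h0,
            if_neg (show ¬(a:ℕ) = N-1 by omega), h0, hk]
          rw [show k+2-0 = k+2 from by omega, show k+2-(0+1) = k+1 from by omega]
          have hCden' : C * ((1-μ)*(1+μ^(k+2))) = 1 := by rw [← hk]; exact hCden
          linear_combination (C*(μ^(k+1)-1)) * hq + hCden'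
        · -- interior
          rw [if_pos h0, if_pos h0]
          have hx2 : x (Sum.inl (⟨(a:ℕ)-1, Nat.lt_of_le_of_lt (Nat.sub_le _ _) a.isLt⟩ : Fin N))
              = C * (μ^((a:ℕ)-1+1) - μ^(N-((a:ℕ)-1))) := rfl
          rw [hx2, if_neg h0, if_neg (show ¬(a:ℕ) = N-1 by omega)]
          obtain ⟨k, hk⟩ : ∃ k, N - (a:ℕ) = k+2 := ⟨N-(a:ℕ)-2, by omega⟩
          rw [show (a:ℕ)-1+1 = (a:ℕ) from by omega, show N-((a:ℕ)-1) = k+3 from by omega,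
            show N-((a:ℕ)+1) = k+1 from by omega, hk]
          linear_combination (C*(μ^(k+1) - μ^(a:ℕ))) * hq
      · rw [dif_neg h1, dif_neg h1]
        by_cases h0 : (a:ℕ) = 0
        · -- N = 1
          have hN1 : N = 1 := by omega
          rw [if_neg (fun hh => hh h0), if_neg (fun hh => hh h0), if_pos h0,
            if_pos (show (a:ℕ) = N-1 by omega), h0, hN1]
          norm_num
        · -- right endpoint, N ≥ 2
          obtain ⟨k, hk⟩ : ∃ k, N = k+2 := ⟨N-2, by omega⟩
          have hak : (a:ℕ) = k+1 := by omega
          have hx2 : x (Sum.inl (⟨(a:ℕ)-1, Nat.lt_of_le_of_lt (Nat.sub_le _ _) a.isLt⟩ : Fin N))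
              = C * (μ^((a:ℕ)-1+1) - μ^(N-((a:ℕ)-1))) := rfl
          rw [if_pos h0, if_pos h0, hx2, if_neg h0, if_pos (show (a:ℕ) = N-1 by omega)]
          rw [show (a:ℕ)-1+1 = (a:ℕ) from by omega, hak, hk]
          rw [show k+2-(k+1) = 1 from by omega, show k+2-(k+1-1) = 2 from by omega]
          have hCden' : C * ((1-μ)*(1+μ^(k+2))) = 1 := by rw [← hk]; exact hCden
          linear_combination (C*(1-μ^(k+1))) * hq - hCden'
    · rcases u
      rw [coneLap_mulVec_inr]
      have h1 : x (Sum.inr ()) = 0 := rfl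
      have h2 : ∑ b : Fin N, x (Sum.inl b) = 0 := by
        have : ∀ b : Fin N, x (Sum.inl b) = C * (μ^((b:ℕ)+1) - μ^(N-(b:ℕ))) := fun b => rfl
        rw [Finset.sum_congr rfl fun b _ => this b, ← Finset.mul_sum, sum_mu_zero, mul_zero]
      rw [h1, h2]
      have : ((Pi.single (Sum.inl (⟨0, by omega⟩ : Fin N)) 1 : Fin N ⊕ Unit → ℝ)
            - (Pi.single (Sum.inl (⟨N-1, by omega⟩ : Fin N)) 1 : Fin N ⊕ Unit → ℝ)) (Sum.inr ()) = 0 := by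
        simp [Pi.single_apply]
      rw [this]
      ring
  rw [effRes_eq_of_solution _ (coneLap_symm _ _) _ _ _ hx]
  have e1 : x (Sum.inl (⟨0, by omega⟩ : Fin N)) = C * (μ^(0+1) - μ^(N-0)) := rfl
  have e2 : x (Sum.inl (⟨N-1, by omega⟩ : Fin N)) = C * (μ^((N-1)+1) - μ^(N-(N-1))) := rfl
  rw [e1, e2]
  have eN1 : N - 1 + 1 = N := by omega
  have eN2 : N - (N-1) = 1 := by omega
  rw [eN1, eN2, hC]
  field_simp
  simp only [Nat.sub_zero]
  ring


/-- Asymptotics of end-to-end effective resistances in weighted fan graphs. -/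
theorem effRes_fan_ends_diff (n m : ℕ) (hn : 1 ≤ n) (hm : 1 < m) :
    0 < effRes (coneLap (SimpleGraph.pathGraph (n + 1)) m)
          (Sum.inl ⟨0, by omega⟩) (Sum.inl ⟨n, by omega⟩)
        - effRes (coneLap (SimpleGraph.pathGraph n) m)
            (Sum.inl ⟨0, by omega⟩) (Sum.inl ⟨n - 1, by omega⟩)
    ∧ effRes (coneLap (SimpleGraph.pathGraph (n + 1)) m)
          (Sum.inl ⟨0, by omega⟩) (Sum.inl ⟨n, by omega⟩)
        - effRes (coneLap (SimpleGraph.pathGraph n) m)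
            (Sum.inl ⟨0, by omega⟩) (Sum.inl ⟨n - 1, by omega⟩)
      < 2 / m ^ n := by
  set mR : ℝ := (m : ℝ) with hmR
  have hmR1 : (1:ℝ) < mR := by rw [hmR]; exact_mod_cast hm
  set s : ℝ := Real.sqrt (mR^2 + 4*mR) with hs
  have hs2 : s^2 = mR^2 + 4*mR := Real.sq_sqrt (by nlinarith)
  have hs0 : 0 ≤ s := Real.sqrt_nonneg _
  have hslb : mR < s := by nlinarith
  have hsub : s < mR + 2 := by nlinarith
  set μ : ℝ := (mR + 2 - s)/2 with hμ
  have hμ0 : 0 < μ := by rw [hμ]; linarith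
  have hμ1 : μ < 1 := by rw [hμ]; linarith
  have hq : μ^2 + 1 = (mR + 2)*μ := by
    rw [hμ]; linear_combination (1/4) * hs2
  clear_value μ s mR
  have h₁ := effRes_fan (n+1) (by omega) mR μ hμ0 hμ1 hq
  have h₂ := effRes_fan n hn mR μ hμ0 hμ1 hq
  simp only [Nat.add_sub_cancel] at h₁
  rw [h₁, h₂]
  clear h₁ h₂ hs hμ
  have hpn : 0 < μ^n := pow_pos hμ0 n
  have hpn1 : 0 < μ^(n+1) := pow_pos hμ0 (n+1)
  have h1μ : 0 < 1 - μ := by linarith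
  have hden1 : 0 < 1 + μ^(n+1) := by linarith
  have hden2 : 0 < 1 + μ^n := by linarith
  have hdiff : 2*(μ - μ^(n+1)) / ((1-μ)*(1+μ^(n+1))) - 2*(μ - μ^n) / ((1-μ)*(1+μ^n))
      = 2*μ^n*(1+μ) / ((1+μ^(n+1))*(1+μ^n)) := by
    field_simp
    ring
  rw [hdiff]
  constructor
  · apply div_pos
    · nlinarith
    · nlinarith
  · have hmpow : (0:ℝ) < mR^n := pow_pos (by linarith) n
    show 2*μ^n*(1+μ) / ((1+μ^(n+1))*(1+μ^n)) < 2 / mR^n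
    rw [div_lt_div_iff₀ (by nlinarith) hmpow]
    have hmμ : mR * μ = (1-μ)^2 := by linear_combination -hq
    have hmain : μ^n * mR^n = ((1-μ)^2)^n := by rw [← mul_pow, mul_comm, hmμ]
    have hle : ((1-μ)^2)^n ≤ (1-μ)^2 := by
      calc ((1-μ)^2)^n ≤ ((1-μ)^2)^1 :=
            pow_le_pow_of_le_one (by positivity) (by nlinarith) hn
        _ = (1-μ)^2 := pow_one _
    have hm3 : μ^3 ≤ μ^2 := pow_le_pow_of_le_one (le_of_lt hμ0) (le_of_lt hμ1) (by omega)
    have hlt : (1-μ)^2 * (1+μ) < 1 := by nlinarith [hm3, hμ0]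
    have hD : 1 < (1+μ^(n+1))*(1+μ^n) := by nlinarith [hpn, hpn1, mul_pos hpn1 hpn]
    have h1pμ : (0:ℝ) ≤ 1 + μ := by linarith
    calc 2*μ^n*(1+μ) * mR^n = 2*(((1-μ)^2)^n*(1+μ)) := by rw [← hmain]; ring
      _ ≤ 2*((1-μ)^2*(1+μ)) := by
            have := mul_le_mul_of_nonneg_right hle h1pμ
            linarith
      _ < 2*((1+μ^(n+1))*(1+μ^n)) := by linarith [hlt, hD]
end
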